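/- There exist absolute constants c, C > 0 such that if p ≥ c·μ⁶·log^{1.5}(d)/d, then with probability at least 1 − 1/d over the random choice of Ω the following holds: every x ∈ B = {x ∈ ℝ^d : ‖x‖_∞ ≤ 2μ/√d, ‖x‖₂ ≤ 1} satisfying the first-order optimality condition P_Ω(zzᵀ − xxᵀ)x = 0 satisfies ‖⟨z, x⟩z − ‖x‖₂²·x‖₂ ≤ C·μ³·log(d)·(pd)^{−1/2}. -/

import Mathlib

open Matrix Finset MeasureTheory

noncomputable section

/-- Euclidean norm of a finite real vector. -/
def vnorm {n : ℕ} (x : Fin n → ℝ) : ℝ := Real.sqrt (∑ i, (x i) ^ 2)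

/-- Frobenius norm of a matrix. -/
def frobNorm {m n : ℕ} (A : Matrix (Fin m) (Fin n) ℝ) : ℝ :=
  Real.sqrt (∑ i, ∑ j, (A i j) ^ 2)

/-- Outer product of two vectors, as a matrix. -/
def outer {n : ℕ} (x y : Fin n → ℝ) : Matrix (Fin n) (Fin n) ℝ := fun i j => x i * y j

/-- `P_Ω`: the sample `ω` assigns a Boolean to each (ordered) pair; the entry `(i,j)`
is observed iff the Boolean attached to the unordered pair `{i,j}` (encoded as
`(min i j, max i j)`) is `true`.  This makes the observed set symmetric, with each
unordered pair included independently. -/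
def projO {d : ℕ} (ω : Fin d × Fin d → Bool) (A : Matrix (Fin d) (Fin d) ℝ) :
    Matrix (Fin d) (Fin d) ℝ :=
  fun i j => if ω (min i j, max i j) then A i j else 0

/-- Gradient of the regularizer `R(x) = ∑ᵢ (|xᵢ| − α)⁴ 1_{|xᵢ| ≥ α}`. -/
def gradR {d : ℕ} (α : ℝ) (x : Fin d → ℝ) : Fin d → ℝ :=
  fun i => if α ≤ |x i| then 4 * (|x i| - α) ^ 3 * Real.sign (x i) else 0

/-- Hessian quadratic form `vᵀ ∇²R(x) v` of the regularizer. -/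
def hessRQuad {d : ℕ} (α : ℝ) (x v : Fin d → ℝ) : ℝ :=
  ∑ i, (if α ≤ |x i| then 12 * (|x i| - α) ^ 2 else 0) * (v i) ^ 2

/-- The distribution of the random observation pattern: each unordered pair is included
independently with probability `p`.  -/
def omegaMeasure (d : ℕ) (p : ℝ) (hp1 : p ≤ 1) : Measure (Fin d × Fin d → Bool) :=
  Measure.pi fun _ => (PMF.bernoulli (Real.toNNReal p) (Real.toNNReal_le_one.mpr hp1)).toMeasure

namespace Stmt6

variable {n : ℕ}



lemma vnorm_nonneg (x : Fin n → ℝ) : 0 ≤ vnorm x := Real.sqrt_nonneg _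

lemma vnorm_sq (x : Fin n → ℝ) : vnorm x ^ 2 = ∑ i, (x i) ^ 2 :=
  Real.sq_sqrt (Finset.sum_nonneg fun i _ => sq_nonneg _)

lemma vnorm_le_of_sq_le {x : Fin n → ℝ} {a : ℝ} (ha : 0 ≤ a)
    (h : ∑ i, (x i) ^ 2 ≤ a ^ 2) : vnorm x ≤ a := by
  have := Real.sqrt_le_sqrt h
  rwa [Real.sqrt_sq ha] at this

lemma sum_mul_le_vnorm (f g : Fin n → ℝ) : ∑ i, f i * g i ≤ vnorm f * vnorm g := by
  have h := Finset.sum_mul_sq_le_sq_mul_sq Finset.univ f g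
  have h1 : ∑ i, f i * g i ≤ Real.sqrt ((∑ i, f i * g i) ^ 2) := by
    rw [Real.sqrt_sq_eq_abs]; exact le_abs_self _
  refine h1.trans ?_
  rw [show vnorm f * vnorm g = Real.sqrt ((∑ i, (f i) ^ 2) * ∑ i, (g i) ^ 2) from
    (Real.sqrt_mul (Finset.sum_nonneg fun i _ => sq_nonneg _) _).symm]
  exact Real.sqrt_le_sqrt h

lemma vnorm_sub_le (f g : Fin n → ℝ) :
    vnorm (fun i => f i - g i) ≤ vnorm f + vnorm g := by
  refine vnorm_le_of_sq_le (by have := vnorm_nonneg f; have := vnorm_nonneg g; linarith) ?_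
  have h := sum_mul_le_vnorm (fun i => - f i) g
  have h2 : vnorm (fun i => - f i) = vnorm f := by
    unfold vnorm; congr 1; apply Finset.sum_congr rfl; intro i _; ring
  rw [h2] at h
  have hf := vnorm_sq f; have hg := vnorm_sq g
  have expand : ∑ i, (f i - g i) ^ 2
      = ∑ i, (f i) ^ 2 + ∑ i, (g i) ^ 2 + 2 * ∑ i, (- f i) * g i := by
    rw [← Finset.sum_add_distrib, Finset.mul_sum, ← Finset.sum_add_distrib]
    apply Finset.sum_congr rfl; intro i _; ring
  nlinarith [vnorm_nonneg f, vnorm_nonneg g]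

lemma vnorm_smul (a : ℝ) (x : Fin n → ℝ) : vnorm (a • x) = |a| * vnorm x := by
  unfold vnorm
  rw [show ∑ i, ((a • x) i) ^ 2 = a ^ 2 * ∑ i, (x i) ^ 2 by
    rw [Finset.mul_sum]; apply Finset.sum_congr rfl; intro i _
    simp [Pi.smul_apply, smul_eq_mul]; ring]
  rw [Real.sqrt_mul (sq_nonneg a), Real.sqrt_sq_eq_abs]

lemma vnorm_mul_le {a w : Fin n → ℝ} {ν : ℝ} (hν : 0 ≤ ν) (ha : ∀ i, |a i| ≤ ν) :
    vnorm (fun i => a i * w i) ≤ ν * vnorm w := by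
  refine vnorm_le_of_sq_le (by have := vnorm_nonneg w; positivity) ?_
  rw [mul_pow, vnorm_sq, Finset.mul_sum]
  apply Finset.sum_le_sum
  intro i _
  have h1 : (a i * w i) ^ 2 = (a i)^2 * (w i)^2 := by ring
  rw [h1]
  apply mul_le_mul_of_nonneg_right ?_ (sq_nonneg _)
  calc (a i)^2 = |a i|^2 := (sq_abs _).symm
  _ ≤ ν ^ 2 := by apply pow_le_pow_left₀ (abs_nonneg _) (ha i)

-- frobenius bound on mulVec
lemma vnorm_mulVec_le_frob (M : Matrix (Fin n) (Fin n) ℝ) (u : Fin n → ℝ) :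
    vnorm (M.mulVec u) ≤ Real.sqrt (∑ i, ∑ j, (M i j)^2) * vnorm u := by
  refine vnorm_le_of_sq_le (by have := vnorm_nonneg u; positivity) ?_
  rw [mul_pow, Real.sq_sqrt (by positivity), vnorm_sq, Finset.sum_mul]
  apply Finset.sum_le_sum
  intro i _
  have hcs := Finset.sum_mul_sq_le_sq_mul_sq Finset.univ (fun j => M i j) u
  simpa [Matrix.mulVec, dotProduct] using hcs

-- trace of B*B for symmetric B equals sum of squares
lemma trace_mul_self_symm {B : Matrix (Fin n) (Fin n) ℝ} (hB : Bᵀ = B) :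
    (B * B).trace = ∑ i, ∑ j, (B i j)^2 := by
  rw [Matrix.trace]
  apply Finset.sum_congr rfl
  intro i _
  rw [Matrix.diag_apply, Matrix.mul_apply]
  apply Finset.sum_congr rfl
  intro j _
  have : B j i = B i j := by conv_lhs => rw [← hB, Matrix.transpose_apply]
  rw [this]; ring

lemma dot_self_mulVec {M : Matrix (Fin n) (Fin n) ℝ} (hM : Mᵀ = M) (u : Fin n → ℝ) :
    (M.mulVec u) ⬝ᵥ (M.mulVec u) = u ⬝ᵥ ((M * M).mulVec u) := by
  rw [← Matrix.mulVec_mulVec, dotProduct_mulVec u M (M.mulVec u)]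
  rw [← Matrix.mulVec_transpose, hM, dotProduct_comm]

-- main: symmetric A with small trace of power has small operator norm
lemma opBound_of_trace {A : Matrix (Fin n) (Fin n) ℝ} (hA : Aᵀ = A) (J : ℕ) {t : ℝ}
    (ht : 0 ≤ t) (htr : (A ^ (2 * 2^J)).trace ≤ t ^ (2 * 2^J)) (u : Fin n → ℝ) :
    vnorm (A.mulVec u) ≤ t * vnorm u := by
  -- n_j := vnorm ((A^(2^j)).mulVec u)
  set N : ℕ → ℝ := fun j => vnorm ((A ^ (2^j : ℕ)).mulVec u) with hN
  have hApow : ∀ m : ℕ, (A ^ m)ᵀ = A ^ m := fun m => by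
    rw [Matrix.transpose_pow, hA]
  have hstep : ∀ j : ℕ, N j ^ 2 ≤ vnorm u * N (j+1) := by
    intro j
    have h1 : N j ^ 2 = ((A ^ (2^j : ℕ)).mulVec u) ⬝ᵥ ((A ^ (2^j : ℕ)).mulVec u) := by
      rw [hN, vnorm_sq]; simp [dotProduct, sq]
    rw [h1, dot_self_mulVec (hApow _) u, ← pow_add]
    have h2 : 2^j + 2^j = 2^(j+1) := by ring
    rw [h2]
    exact sum_mul_le_vnorm u _
  have hNnonneg : ∀ j, 0 ≤ N j := fun j => vnorm_nonneg _
  have hun : 0 ≤ vnorm u := vnorm_nonneg u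
  -- chain inequality
  have hchain : ∀ J : ℕ, N 0 ^ (2^J : ℕ) ≤ vnorm u ^ (2^J - 1 : ℕ) * N J := by
    intro J
    induction J with
    | zero => simp
    | succ J ih =>
      have h1 : N 0 ^ (2^(J+1) : ℕ) = (N 0 ^ (2^J : ℕ))^2 := by
        rw [← pow_mul]; ring_nf
      rw [h1]
      calc (N 0 ^ (2^J : ℕ))^2 ≤ (vnorm u ^ (2^J - 1 : ℕ) * N J)^2 := by
            apply pow_le_pow_left₀ (pow_nonneg (hNnonneg 0) _) ih
        _ = vnorm u ^ ((2^J - 1) * 2 : ℕ) * N J ^ 2 := by rw [mul_pow, ← pow_mul]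
        _ ≤ vnorm u ^ ((2^J - 1) * 2 : ℕ) * (vnorm u * N (J+1)) := by
            apply mul_le_mul_of_nonneg_left (hstep J) (pow_nonneg hun _)
        _ = vnorm u ^ (2^(J+1) - 1 : ℕ) * N (J+1) := by
            rw [← mul_assoc, ← pow_succ]
            congr 2
            have h1 : 1 ≤ 2^J := Nat.one_le_two_pow
            rw [pow_succ]
            generalize 2^J = m at h1 ⊢
            omega
  -- bound N J via frobenius/trace
  have hNJ : N J ≤ t ^ (2^J : ℕ) * vnorm u := by
    have h1 := vnorm_mulVec_le_frob (A ^ (2^J : ℕ)) u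
    have h2 : ∑ i, ∑ j, ((A ^ (2^J : ℕ)) i j)^2 = (A ^ (2 * 2^J)).trace := by
      rw [show 2 * 2^J = 2^J + 2^J by ring, pow_add]
      exact (trace_mul_self_symm (hApow _)).symm
    refine h1.trans ?_
    apply mul_le_mul_of_nonneg_right ?_ hun
    rw [h2]
    have h3 : Real.sqrt ((A ^ (2 * 2^J)).trace) ≤ Real.sqrt (t ^ (2 * 2^J)) :=
      Real.sqrt_le_sqrt htr
    refine h3.trans_eq ?_
    rw [mul_comm 2 (2^J), pow_mul, Real.sqrt_sq (by positivity)]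
  -- combine
  have hfinal : N 0 ^ (2^J : ℕ) ≤ (t * vnorm u) ^ (2^J : ℕ) := by
    calc N 0 ^ (2^J : ℕ) ≤ vnorm u ^ (2^J - 1 : ℕ) * N J := hchain J
      _ ≤ vnorm u ^ (2^J - 1 : ℕ) * (t ^ (2^J : ℕ) * vnorm u) := by
          apply mul_le_mul_of_nonneg_left hNJ (pow_nonneg hun _)
      _ = t ^ (2^J : ℕ) * (vnorm u ^ (2^J - 1 : ℕ) * vnorm u) := by ring
      _ = t ^ (2^J : ℕ) * vnorm u ^ (2^J : ℕ) := by
          rw [← pow_succ, Nat.sub_add_cancel Nat.one_le_two_pow]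
      _ = (t * vnorm u) ^ (2^J : ℕ) := (mul_pow _ _ _).symm
  have hk0 : (2^J : ℕ) ≠ 0 := (pow_pos (by norm_num : (0:ℕ) < 2) J).ne'
  have := pow_le_pow_iff_left₀ (hNnonneg 0) (by positivity : (0:ℝ) ≤ t * vnorm u) hk0
  have hres : N 0 ≤ t * vnorm u := this.mp hfinal
  simpa [hN] using hres


variable {d : ℕ}


def walkProd (A : Matrix (Fin d) (Fin d) ℝ) {m : ℕ} (s : Fin (m+1) → Fin d) : ℝ :=
  ∏ t : Fin m, A (s t.castSucc) (s t.succ)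

lemma sum_cons_expand {m : ℕ} (F : (Fin (m+1) → Fin d) → ℝ) :
    ∑ s : Fin (m+1) → Fin d, F s = ∑ a : Fin d, ∑ s' : Fin m → Fin d, F (Fin.cons a s') := by
  have h1 : ∑ s : Fin (m+1) → Fin d, F s
      = ∑ p : Fin d × (Fin m → Fin d), F (Fin.cons p.1 p.2) :=
    (Fintype.sum_equiv (Fin.consEquiv (fun _ => Fin d))
      (fun p => F (Fin.cons p.1 p.2)) F (fun p => by
        congr 1)).symm
  rw [h1]
  exact Fintype.sum_prod_type (f := fun p : Fin d × (Fin m → Fin d) => F (Fin.cons p.1 p.2))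

lemma walkProd_cons {m : ℕ} (A : Matrix (Fin d) (Fin d) ℝ) (a : Fin d)
    (s' : Fin (m+1) → Fin d) :
    walkProd A (Fin.cons a s' : Fin (m+2) → Fin d) = A a (s' 0) * walkProd A s' := by
  unfold walkProd
  rw [Fin.prod_univ_succ]
  have h0 : (Fin.cons a s' : Fin (m+2) → Fin d) ((0 : Fin (m+1)).castSucc) = a := by
    simp
  have h1 : (Fin.cons a s' : Fin (m+2) → Fin d) ((0 : Fin (m+1)).succ) = s' 0 := by
    simp
  rw [h0, h1]
  congr 1

lemma pow_apply_eq_sum_walks (A : Matrix (Fin d) (Fin d) ℝ) (m : ℕ) (i j : Fin d) :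
    (A ^ m) i j = ∑ s : Fin (m+1) → Fin d,
      (if s 0 = i ∧ s (Fin.last m) = j then walkProd A s else 0) := by
  induction m generalizing i j with
  | zero =>
    rw [pow_zero]
    rw [show ∑ s : Fin 1 → Fin d, (if s 0 = i ∧ s (Fin.last 0) = j then walkProd A s else 0)
        = ∑ v : Fin d, (if v = i ∧ v = j then 1 else 0) from
      Fintype.sum_equiv (Equiv.funUnique (Fin 1) (Fin d)) _ _ (fun s => by
        simp [walkProd, Fin.last, Equiv.funUnique])]
    rw [Matrix.one_apply]
    by_cases hij : i = j
    · subst hij; simp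
    · rw [if_neg hij]
      symm
      apply Finset.sum_eq_zero
      intro v _
      rw [if_neg]
      rintro ⟨rfl, rfl⟩
      exact hij rfl
  | succ m ih =>
    rw [pow_succ', Matrix.mul_apply]
    calc ∑ b : Fin d, A i b * (A ^ m) b j
        = ∑ b : Fin d, ∑ s' : Fin (m+1) → Fin d,
            (if s' 0 = b ∧ s' (Fin.last m) = j then A i b * walkProd A s' else 0) := by
          apply Finset.sum_congr rfl
          intro b _
          rw [ih b j, Finset.mul_sum]
          apply Finset.sum_congr rfl
          intro s' _
          split <;> simp
      _ = ∑ s' : Fin (m+1) → Fin d, ∑ b : Fin d,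
            (if b = s' 0 then (if s' (Fin.last m) = j then A i b * walkProd A s' else 0)
              else 0) := by
          rw [Finset.sum_comm]
          apply Finset.sum_congr rfl; intro s' _
          apply Finset.sum_congr rfl; intro b _
          by_cases h1 : b = s' 0
          · subst h1
            by_cases h2 : s' (Fin.last m) = j <;> simp [h2]
          · rw [if_neg h1, if_neg (by tauto)]
      _ = ∑ s' : Fin (m+1) → Fin d,
            (if s' (Fin.last m) = j then A i (s' 0) * walkProd A s' else 0) := by
          apply Finset.sum_congr rfl; intro s' _
          rw [Finset.sum_ite_eq' Finset.univ (s' 0)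
            (fun b => if s' (Fin.last m) = j then A i b * walkProd A s' else 0)]
          rw [if_pos (Finset.mem_univ _)]
      _ = ∑ s : Fin (m+2) → Fin d,
            (if s 0 = i ∧ s (Fin.last (m+1)) = j then walkProd A s else 0) := by
          symm
          rw [sum_cons_expand (fun s => if s 0 = i ∧ s (Fin.last (m+1)) = j
            then walkProd A s else 0)]
          have hco : ∀ a : Fin d, (∑ s' : Fin (m+1) → Fin d,
              (if (Fin.cons a s' : Fin (m+2) → Fin d) 0 = i ∧
                  (Fin.cons a s' : Fin (m+2) → Fin d) (Fin.last (m+1)) = j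
                then walkProd A (Fin.cons a s' : Fin (m+2) → Fin d) else 0))
              = (if a = i then ∑ s' : Fin (m+1) → Fin d,
                  (if s' (Fin.last m) = j then A a (s' 0) * walkProd A s' else 0) else 0) := by
            intro a
            by_cases ha : a = i
            · subst ha
              rw [if_pos rfl]
              apply Finset.sum_congr rfl
              intro s' _
              have hlast : (Fin.cons a s' : Fin (m+2) → Fin d) (Fin.last (m+1))
                  = s' (Fin.last m) := by
                rw [← Fin.succ_last, Fin.cons_succ]
              rw [Fin.cons_zero, hlast, walkProd_cons]
              simp
            · rw [if_neg ha]
              apply Finset.sum_eq_zero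
              intro s' _
              rw [if_neg]
              rw [Fin.cons_zero]
              tauto
          rw [Finset.sum_congr rfl (fun a _ => hco a)]
          rw [Finset.sum_ite_eq' Finset.univ i, if_pos (Finset.mem_univ _)]

lemma trace_pow_eq_sum_walks (A : Matrix (Fin d) (Fin d) ℝ) (m : ℕ) :
    (A ^ m).trace = ∑ s : Fin (m+1) → Fin d,
      (if s 0 = s (Fin.last m) then walkProd A s else 0) := by
  rw [Matrix.trace]
  calc ∑ i, (A ^ m).diag i
      = ∑ i, ∑ s : Fin (m+1) → Fin d,
          (if s 0 = i ∧ s (Fin.last m) = i then walkProd A s else 0) := by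
        apply Finset.sum_congr rfl; intro i _
        rw [Matrix.diag_apply, pow_apply_eq_sum_walks]
    _ = ∑ s : Fin (m+1) → Fin d, ∑ i,
          (if i = s 0 then (if s 0 = s (Fin.last m) then walkProd A s else 0) else 0) := by
        rw [Finset.sum_comm]
        apply Finset.sum_congr rfl; intro s _
        apply Finset.sum_congr rfl; intro i _
        by_cases h1 : i = s 0
        · subst h1
          by_cases h2 : s 0 = s (Fin.last m)
          · rw [if_pos rfl, if_pos h2, if_pos ⟨rfl, h2.symm⟩]
          · rw [if_pos rfl, if_neg h2, if_neg (by tauto)]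
        · rw [if_neg (by tauto), if_neg h1]
    _ = ∑ s : Fin (m+1) → Fin d,
          (if s 0 = s (Fin.last m) then walkProd A s else 0) := by
        apply Finset.sum_congr rfl; intro s _
        rw [Finset.sum_ite_eq' Finset.univ (s 0), if_pos (Finset.mem_univ _)]



/-- the (signed) indicator matrix entries -/
def Dm (p : ℝ) (ω : Fin d × Fin d → Bool) : Matrix (Fin d) (Fin d) ℝ :=
  fun i j => (if ω (min i j, max i j) then (1:ℝ) else 0) - p

def edgeOf {m : ℕ} (s : Fin (m+1) → Fin d) (t : Fin m) : Fin d × Fin d :=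
  (min (s t.castSucc) (s t.succ), max (s t.castSucc) (s t.succ))

def mult {m : ℕ} (s : Fin (m+1) → Fin d) (e : Fin d × Fin d) : ℕ :=
  (Finset.univ.filter (fun t => edgeOf s t = e)).card

/-- integral over the product measure of a product of coordinate functions -/
lemma integral_pi_prod {ι : Type*} [Fintype ι] (μ : Measure Bool) [IsProbabilityMeasure μ]
    (f : ι → Bool → ℝ) :
    ∫ ω : ι → Bool, ∏ i, f i (ω i) ∂(Measure.pi fun _ => μ) = ∏ i, ∫ b, f i b ∂μ := by
  letI : MeasureSpace Bool := ⟨μ⟩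
  have hvol : Measure.pi (fun _ : ι => μ) = (volume : Measure (ι → Bool)) := rfl
  rw [hvol]
  exact MeasureTheory.integral_fintype_prod_eq_prod (fun i b => f i b)

/-- moments of the centered bernoulli variable -/
def bmoment (p : ℝ) (m : ℕ) : ℝ := p * (1-p)^m + (1-p) * (-p)^m

lemma integral_bernoulli_pow (p : ℝ) (hp0 : 0 ≤ p) (hp1 : p ≤ 1) (m : ℕ) :
    ∫ b, ((if b then (1:ℝ) else 0) - p) ^ m
      ∂((PMF.bernoulli (Real.toNNReal p) (Real.toNNReal_le_one.mpr hp1)).toMeasure)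
      = bmoment p m := by
  rw [MeasureTheory.integral_fintype]
  · have ht : ((PMF.bernoulli (Real.toNNReal p) (Real.toNNReal_le_one.mpr hp1)).toMeasure
        {true}).toReal = p := by
      rw [PMF.toMeasure_apply_singleton _ _ (measurableSet_singleton _)]
      rw [PMF.bernoulli_apply]
      simp [Real.coe_toNNReal _ hp0]
    have hf : ((PMF.bernoulli (Real.toNNReal p) (Real.toNNReal_le_one.mpr hp1)).toMeasure
        {false}).toReal = 1 - p := by
      rw [PMF.toMeasure_apply_singleton _ _ (measurableSet_singleton _)]
      rw [PMF.bernoulli_apply]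
      simp [ENNReal.toReal_sub_of_le (ENNReal.ofReal_le_one.mpr hp1),
        Real.coe_toNNReal _ hp0, Real.toNNReal_le_one.mpr hp1]
    rw [Fintype.sum_bool, measureReal_def, measureReal_def, ht, hf]
    unfold bmoment
    norm_num
  · exact Integrable.of_finite

lemma bmoment_zero (p : ℝ) : bmoment p 0 = 1 := by unfold bmoment; ring
lemma bmoment_one (p : ℝ) : bmoment p 1 = 0 := by unfold bmoment; ring
lemma abs_bmoment_le (p : ℝ) (hp0 : 0 ≤ p) (hp1 : p ≤ 1) {m : ℕ} (hm : 2 ≤ m) :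
    |bmoment p m| ≤ p := by
  have h1 : (1-p)^m ≤ (1-p) := pow_le_of_le_one (by linarith) (by linarith) (by omega)
  have h2 : p^m ≤ p^2 := pow_le_pow_of_le_one hp0 hp1 hm
  have h3 : |bmoment p m| ≤ p * (1-p)^m + (1-p) * p^m := by
    unfold bmoment
    refine (abs_add_le _ _).trans ?_
    have e1 : |p * (1-p)^m| = p * (1-p)^m :=
      abs_of_nonneg (mul_nonneg hp0 (pow_nonneg (by linarith) m))
    have e2 : |(1-p) * (-p)^m| = (1-p) * p^m := by
      rw [abs_mul, abs_pow, abs_neg, abs_of_nonneg hp0,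
        abs_of_nonneg (by linarith : (0:ℝ) ≤ 1 - p)]
    rw [e1, e2]
  nlinarith [pow_nonneg hp0 m, pow_nonneg (by linarith : (0:ℝ) ≤ 1-p) m]



/-- connectivity: #vertices ≤ #edges + 1 -/
lemma card_image_le_card_edges {m : ℕ} (s : Fin (m+1) → Fin d) :
    (Finset.univ.image s).card ≤ (Finset.univ.image (edgeOf s)).card + 1 := by
  induction m with
  | zero =>
    have : (Finset.univ.image s).card ≤ 1 := by
      refine Finset.card_image_le.trans ?_
      simp
    omega
  | succ m ih =>
    set s' : Fin (m+1) → Fin d := fun t => s t.castSucc with hs'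
    have hedge : ∀ t' : Fin m, edgeOf s' t' = edgeOf s t'.castSucc := by
      intro t'
      unfold edgeOf
      rw [hs']
      simp only
      rw [← Fin.succ_castSucc]
    have himsub : Finset.univ.image s ⊆
        insert (s (Fin.last (m+1))) (Finset.univ.image s') := by
      intro v hv
      rw [Finset.mem_image] at hv
      obtain ⟨t, _, rfl⟩ := hv
      rcases Fin.eq_castSucc_or_eq_last t with ⟨t', rfl⟩ | rfl
      · exact Finset.mem_insert_of_mem (Finset.mem_image_of_mem s' (Finset.mem_univ t'))
      · exact Finset.mem_insert_self _ _
    have hedgesub : Finset.univ.image (edgeOf s') ⊆ Finset.univ.image (edgeOf s) := by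
      intro e he
      rw [Finset.mem_image] at he ⊢
      obtain ⟨t', _, rfl⟩ := he
      exact ⟨t'.castSucc, Finset.mem_univ _, (hedge t').symm⟩
    by_cases hin : s (Fin.last (m+1)) ∈ Finset.univ.image s'
    · have h1 : (Finset.univ.image s).card ≤ (Finset.univ.image s').card := by
        apply Finset.card_le_card
        rwa [Finset.insert_eq_self.mpr hin] at himsub
      exact h1.trans ((ih s').trans (by
        have := Finset.card_le_card hedgesub; omega))
    · -- the last edge is new
      set elast := edgeOf s (Fin.last m) with helast
      have hnewedge : elast ∉ Finset.univ.image (edgeOf s') := by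
        intro hmem
        rw [Finset.mem_image] at hmem
        obtain ⟨t', _, ht'⟩ := hmem
        -- s (last (m+1)) is min or max of elast, and elast's min/max are in image s'
        have hlast_mem : s (Fin.last (m+1)) = elast.1 ∨ s (Fin.last (m+1)) = elast.2 := by
          rw [helast]
          unfold edgeOf
          have : (Fin.last m).succ = Fin.last (m+1) := Fin.succ_last m
          rw [this]
          rcases le_total (s (Fin.last m).castSucc) (s (Fin.last (m+1))) with h | h
          · right; simp [max_eq_right h]
          · left; simp [min_eq_right h]
        have h1 : elast.1 ∈ Finset.univ.image s' ∧ elast.2 ∈ Finset.univ.image s' := by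
          rw [← ht']
          unfold edgeOf
          constructor
          · rcases min_cases (s' t'.castSucc) (s' t'.succ) with ⟨h, _⟩ | ⟨h, _⟩ <;>
              · simp only [h]
                exact Finset.mem_image_of_mem s' (Finset.mem_univ _)
          · rcases max_cases (s' t'.castSucc) (s' t'.succ) with ⟨h, _⟩ | ⟨h, _⟩ <;>
              · simp only [h]
                exact Finset.mem_image_of_mem s' (Finset.mem_univ _)
        rcases hlast_mem with h | h <;> rw [h] at hin
        · exact hin h1.1
        · exact hin h1.2
      have hmemlast : elast ∈ Finset.univ.image (edgeOf s) :=
        Finset.mem_image_of_mem _ (Finset.mem_univ _)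
      have hsubedge2 : insert elast (Finset.univ.image (edgeOf s'))
          ⊆ Finset.univ.image (edgeOf s) := by
        intro e he
        rcases Finset.mem_insert.mp he with rfl | he
        · exact hmemlast
        · exact hedgesub he
      have hcard2 : (Finset.univ.image (edgeOf s')).card + 1
          ≤ (Finset.univ.image (edgeOf s)).card := by
        have := Finset.card_le_card hsubedge2
        rwa [Finset.card_insert_of_notMem hnewedge] at this
      have hcard1 : (Finset.univ.image s).card ≤ (Finset.univ.image s').card + 1 := by
        have := Finset.card_le_card himsub
        exact this.trans (Finset.card_insert_le _ _)
      have := ih s'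
      omega

/-- counting functions with given image size -/
lemma card_functions_image_eq {m v : ℕ} :
    (Finset.univ.filter
      (fun s : Fin m → Fin d => (Finset.univ.image s).card = v)).card ≤ d^v * v^m := by
  set A := Finset.univ.filter
      (fun s : Fin m → Fin d => (Finset.univ.image s).card = v) with hA
  have key : A.card ≤ v^m * (A.image (fun s => Finset.univ.image s)).card := by
    apply Finset.card_le_mul_card_image
    intro T hT
    rw [Finset.mem_image] at hT
    obtain ⟨s₀, hs₀, rfl⟩ := hT
    rw [hA, Finset.mem_filter] at hs₀
    calc (A.filter (fun s => Finset.univ.image s = Finset.univ.image s₀)).card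
        ≤ (Fintype.piFinset (fun _ : Fin m => Finset.univ.image s₀)).card := by
          apply Finset.card_le_card
          intro s hs
          rw [Finset.mem_filter] at hs
          rw [Fintype.mem_piFinset]
          intro t
          rw [← hs.2]
          exact Finset.mem_image_of_mem s (Finset.mem_univ t)
      _ = (Finset.univ.image s₀).card ^ m := by
          rw [Fintype.card_piFinset]
          simp
      _ = v ^ m := by rw [hs₀.2]
  have h2 : (A.image (fun s => Finset.univ.image s)).card ≤ d^v := by
    have hsub : A.image (fun s => Finset.univ.image s)
        ⊆ Finset.powersetCard v Finset.univ := by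
      intro T hT
      rw [Finset.mem_image] at hT
      obtain ⟨s₀, hs₀, rfl⟩ := hT
      rw [hA, Finset.mem_filter] at hs₀
      rw [Finset.mem_powersetCard]
      exact ⟨Finset.subset_univ _, hs₀.2⟩
    refine (Finset.card_le_card hsub).trans ?_
    rw [Finset.card_powersetCard]
    simp only [Finset.card_univ, Fintype.card_fin]
    exact Nat.choose_le_pow d v
  calc A.card ≤ v^m * (A.image (fun s => Finset.univ.image s)).card := key
    _ ≤ v^m * d^v := Nat.mul_le_mul_left _ h2
    _ = d^v * v^m := Nat.mul_comm _ _


lemma walkProd_Dm {m : ℕ} (p : ℝ) (ω : Fin d × Fin d → Bool) (s : Fin (m+1) → Fin d) :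
    walkProd (Dm p ω) s
      = ∏ e : Fin d × Fin d, ((if ω e then (1:ℝ) else 0) - p) ^ (mult s e) := by
  unfold walkProd
  rw [← Finset.prod_fiberwise Finset.univ (fun t => edgeOf s t)
    (fun t => Dm p ω (s t.castSucc) (s t.succ))]
  apply Finset.prod_congr rfl
  intro e _
  have hconst : ∀ t ∈ Finset.univ.filter (fun t => edgeOf s t = e),
      Dm p ω (s t.castSucc) (s t.succ) = ((if ω e then (1:ℝ) else 0) - p) := by
    intro t ht
    rw [Finset.mem_filter] at ht
    rw [Dm, ← ht.2, edgeOf]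
  rw [Finset.prod_congr rfl hconst, Finset.prod_const, mult]

instance omegaMeasure_prob (d : ℕ) (p : ℝ) (hp1 : p ≤ 1) :
    IsProbabilityMeasure (omegaMeasure d p hp1) := by
  unfold omegaMeasure; infer_instance

/-- expectation of the trace of a power -/
lemma expected_trace (p : ℝ) (hp0 : 0 ≤ p) (hp1 : p ≤ 1) (m : ℕ) :
    ∫ ω, ((Dm p ω : Matrix (Fin d) (Fin d) ℝ) ^ m).trace ∂(omegaMeasure d p hp1)
      = ∑ s : Fin (m+1) → Fin d,
        (if s 0 = s (Fin.last m) then ∏ e : Fin d × Fin d, bmoment p (mult s e) else 0) := by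
  have h1 : ∀ ω, ((Dm p ω : Matrix (Fin d) (Fin d) ℝ) ^ m).trace
      = ∑ s : Fin (m+1) → Fin d,
        (if s 0 = s (Fin.last m) then walkProd (Dm p ω) s else 0) :=
    fun ω => trace_pow_eq_sum_walks (Dm p ω) m
  rw [show (fun ω => ((Dm p ω : Matrix (Fin d) (Fin d) ℝ) ^ m).trace) = fun ω =>
    ∑ s : Fin (m+1) → Fin d, (if s 0 = s (Fin.last m) then walkProd (Dm p ω) s else 0)
    from funext h1]
  rw [MeasureTheory.integral_finset_sum _ (fun s _ => Integrable.of_finite)]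
  apply Finset.sum_congr rfl
  intro s _
  by_cases hc : s 0 = s (Fin.last m)
  · simp only [if_pos hc]
    have h2 : ∀ ω : Fin d × Fin d → Bool, walkProd (Dm p ω) s
        = ∏ e : Fin d × Fin d, ((if ω e then (1:ℝ) else 0) - p) ^ (mult s e) :=
      fun ω => walkProd_Dm p ω s
    rw [show (fun ω => walkProd (Dm p ω) s) = fun ω =>
      ∏ e : Fin d × Fin d, ((if ω e then (1:ℝ) else 0) - p) ^ (mult s e) from funext h2]
    rw [omegaMeasure]
    have h3 := integral_pi_prod (ι := Fin d × Fin d)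
      ((PMF.bernoulli (Real.toNNReal p) (Real.toNNReal_le_one.mpr hp1)).toMeasure)
      (fun e b => ((if b then (1:ℝ) else 0) - p) ^ (mult s e))
    exact h3.trans
      (Finset.prod_congr rfl fun e _ => integral_bernoulli_pow p hp0 hp1 (mult s e))
  · simp only [if_neg hc, integral_zero]

lemma sum_mult_eq {m : ℕ} (s : Fin (m+1) → Fin d) :
    ∑ e : Fin d × Fin d, mult s e = m := by
  have h := Finset.card_eq_sum_card_fiberwise
    (f := fun t : Fin m => edgeOf s t) (s := Finset.univ) (t := Finset.univ)
    (fun t _ => Finset.mem_univ _)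
  simpa [mult] using h.symm

lemma edgecard_le {k : ℕ} (s : Fin (2*k+1) → Fin d)
    (hcond : ∀ t : Fin (2*k), mult s (edgeOf s t) ≠ 1) :
    (Finset.univ.image (edgeOf s)).card ≤ k := by
  have hmem2 : ∀ e ∈ Finset.univ.image (edgeOf s), 2 ≤ mult s e := by
    intro e he
    rw [Finset.mem_image] at he
    obtain ⟨t, _, rfl⟩ := he
    have h1 : 0 < mult s (edgeOf s t) := by
      rw [mult, Finset.card_pos]
      exact ⟨t, Finset.mem_filter.mpr ⟨Finset.mem_univ _, rfl⟩⟩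
    have h2 := hcond t
    omega
  have h3 : 2 * (Finset.univ.image (edgeOf s)).card
      ≤ ∑ e ∈ Finset.univ.image (edgeOf s), mult s e := by
    rw [two_mul]
    calc (Finset.univ.image (edgeOf s)).card + (Finset.univ.image (edgeOf s)).card
        = ∑ _e ∈ Finset.univ.image (edgeOf s), 2 := by
          rw [Finset.sum_const, smul_eq_mul]; ring
      _ ≤ _ := Finset.sum_le_sum hmem2
  have h4 : ∑ e ∈ Finset.univ.image (edgeOf s), mult s e
      ≤ ∑ e : Fin d × Fin d, mult s e :=
    Finset.sum_le_sum_of_subset (Finset.subset_univ _)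
  rw [sum_mult_eq] at h4
  omega

lemma mult_eq_zero_of_not_mem {m : ℕ} (s : Fin (m+1) → Fin d) {e : Fin d × Fin d}
    (he : e ∉ Finset.univ.image (edgeOf s)) : mult s e = 0 := by
  rw [mult, Finset.card_eq_zero]
  rw [Finset.filter_eq_empty_iff]
  intro t _
  intro hte
  exact he (Finset.mem_image.mpr ⟨t, Finset.mem_univ _, hte⟩)

lemma pointwise_walk_bound (p : ℝ) (hp0 : 0 < p) (hp1 : p ≤ 1) {k : ℕ}
    (s : Fin (2*k+1) → Fin d) :
    (if s 0 = s (Fin.last (2*k)) then ∏ e : Fin d × Fin d, bmoment p (mult s e) else 0)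
      ≤ (if (Finset.univ.image s).card ≤ k+1
          then p ^ ((Finset.univ.image s).card - 1) else 0) := by
  have hRHS : (0:ℝ) ≤ (if (Finset.univ.image s).card ≤ k+1
      then p ^ ((Finset.univ.image s).card - 1) else 0) := by
    split
    · positivity
    · exact le_refl 0
  by_cases hc : s 0 = s (Fin.last (2*k))
  swap
  · rw [if_neg hc]; exact hRHS
  rw [if_pos hc]
  by_cases hcond : ∀ t : Fin (2*k), mult s (edgeOf s t) ≠ 1
  · -- all multiplicities at least 2 on the image
    have hEC := edgecard_le s hcond
    have hconn := card_image_le_card_edges s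
    have hVle : (Finset.univ.image s).card ≤ k + 1 := by omega
    rw [if_pos hVle]
    have hprodeq : ∏ e : Fin d × Fin d, bmoment p (mult s e)
        = ∏ e ∈ Finset.univ.image (edgeOf s), bmoment p (mult s e) := by
      symm
      apply Finset.prod_subset (Finset.subset_univ _)
      intro e _ he
      rw [mult_eq_zero_of_not_mem s he, bmoment_zero]
    rw [hprodeq]
    have habs : ∏ e ∈ Finset.univ.image (edgeOf s), bmoment p (mult s e)
        ≤ ∏ e ∈ Finset.univ.image (edgeOf s), p := by
      refine (le_abs_self _).trans ?_
      rw [Finset.abs_prod]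
      apply Finset.prod_le_prod (fun _ _ => abs_nonneg _)
      intro e he
      apply abs_bmoment_le p hp0.le hp1
      rw [Finset.mem_image] at he
      obtain ⟨t, _, rfl⟩ := he
      have h1 : 0 < mult s (edgeOf s t) := by
        rw [mult, Finset.card_pos]
        exact ⟨t, Finset.mem_filter.mpr ⟨Finset.mem_univ _, rfl⟩⟩
      have h2 := hcond t
      omega
    rw [Finset.prod_const] at habs
    refine habs.trans ?_
    apply pow_le_pow_of_le_one hp0.le hp1
    omega
  · -- some multiplicity is exactly one: the weight vanishes
    push_neg at hcond
    obtain ⟨t, ht⟩ := hcond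
    have : ∏ e : Fin d × Fin d, bmoment p (mult s e) = 0 :=
      Finset.prod_eq_zero (Finset.mem_univ (edgeOf s t)) (by rw [ht, bmoment_one])
    rw [this]
    exact hRHS

lemma expected_trace_le (p : ℝ) (hp0 : 0 < p) (hp1 : p ≤ 1) (hpd : 1 ≤ p * d) (k : ℕ) :
    ∫ ω, ((Dm p ω : Matrix (Fin d) (Fin d) ℝ) ^ (2*k)).trace ∂(omegaMeasure d p hp1)
      ≤ ((k:ℝ)+2) * d * ((k:ℝ)+1)^(2*k+1) * (p*d)^k := by
  have hd1 : (1:ℝ) ≤ d := by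
    by_contra hd
    push_neg at hd
    have : (d:ℝ) < 1 := hd
    have hd0 : d = 0 := by exact_mod_cast Nat.lt_one_iff.mp (by exact_mod_cast this)
    rw [hd0] at hpd
    simp at hpd
    nlinarith
  rw [expected_trace p hp0.le hp1 (2*k)]
  have step1 : ∑ s : Fin (2*k+1) → Fin d,
      (if s 0 = s (Fin.last (2*k)) then ∏ e : Fin d × Fin d, bmoment p (mult s e) else 0)
      ≤ ∑ s : Fin (2*k+1) → Fin d,
        (if (Finset.univ.image s).card ≤ k+1
          then p ^ ((Finset.univ.image s).card - 1) else 0) :=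
    Finset.sum_le_sum (fun s _ => pointwise_walk_bound p hp0 hp1 s)
  refine step1.trans ?_
  rw [← Finset.sum_filter]
  set A := Finset.univ.filter
    (fun s : Fin (2*k+1) → Fin d => (Finset.univ.image s).card ≤ k+1) with hA
  have step2 : ∑ s ∈ A, p ^ ((Finset.univ.image s).card - 1)
      = ∑ v ∈ Finset.range (k+2), ∑ s ∈ A.filter
          (fun s => (Finset.univ.image s).card = v), p ^ (v - 1) := by
    rw [← Finset.sum_fiberwise_of_maps_to (s := A) (t := Finset.range (k+2))
      (g := fun s => (Finset.univ.image s).card)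
      (fun s hs => by
        rw [Finset.mem_range]
        rw [hA, Finset.mem_filter] at hs
        exact Nat.lt_succ_of_le hs.2)
      (fun s => p ^ ((Finset.univ.image s).card - 1))]
    apply Finset.sum_congr rfl
    intro v _
    apply Finset.sum_congr rfl
    intro s hs
    rw [Finset.mem_filter] at hs
    rw [hs.2]
  rw [step2]
  have hterm : ∀ v ∈ Finset.range (k+2),
      (∑ _s ∈ A.filter (fun s => (Finset.univ.image s).card = v), p ^ (v-1))
      ≤ (d:ℝ) * ((k:ℝ)+1)^(2*k+1) * (p*d)^k := by
    intro v hv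
    rw [Finset.mem_range] at hv
    rw [Finset.sum_const, nsmul_eq_mul]
    have hcard : ((A.filter (fun s => (Finset.univ.image s).card = v)).card : ℝ)
        ≤ (d:ℝ)^v * (v:ℝ)^(2*k+1) := by
      have h1 : (A.filter (fun s => (Finset.univ.image s).card = v)).card
          ≤ d^v * v^(2*k+1) := by
        refine (Finset.card_le_card ?_).trans
          (card_functions_image_eq (d := d) (m := 2*k+1) (v := v))
        intro s hs
        rw [Finset.mem_filter] at hs ⊢
        exact ⟨Finset.mem_univ _, hs.2⟩
      exact_mod_cast Nat.cast_le.mpr h1 |>.trans_eq (by push_cast; ring)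
    by_cases hv0 : v = 0
    · subst hv0
      have : ((0:ℕ):ℝ)^(2*k+1) = 0 := by norm_num
      rw [this, mul_zero] at hcard
      have hc0 : ((A.filter (fun s => (Finset.univ.image s).card = 0)).card : ℝ) = 0 :=
        le_antisymm (by simpa using hcard) (by positivity)
      rw [hc0, zero_mul]
      have hpd0 : (0:ℝ) < p * d := by nlinarith
      positivity
    · have hv1 : 1 ≤ v := by omega
      have hvk : v ≤ k + 1 := by omega
      calc ((A.filter (fun s => (Finset.univ.image s).card = v)).card : ℝ) * p ^ (v-1)
          ≤ ((d:ℝ)^v * (v:ℝ)^(2*k+1)) * p ^ (v-1) := by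
            apply mul_le_mul_of_nonneg_right hcard (by positivity)
        _ = ((d:ℝ) * (p*d)^(v-1)) * (v:ℝ)^(2*k+1) := by
            have hd : (d:ℝ)^v = (d:ℝ)^(v-1) * d := by
              conv_lhs => rw [show v = (v-1)+1 by omega]
              rw [pow_succ]
            rw [hd, mul_pow]
            ring
        _ ≤ ((d:ℝ) * (p*d)^k) * ((k:ℝ)+1)^(2*k+1) := by
            apply mul_le_mul
            · apply mul_le_mul_of_nonneg_left ?_ (by linarith)
              apply pow_le_pow_right₀ hpd (by omega)
            · apply pow_le_pow_left₀ (by positivity) ?_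
              exact_mod_cast Nat.cast_le.mpr hvk |>.trans_eq (by push_cast; ring)
            · positivity
            · have hpd0 : (0:ℝ) < p * d := by nlinarith
              positivity
        _ = (d:ℝ) * ((k:ℝ)+1)^(2*k+1) * (p*d)^k := by ring
  have htotal := Finset.sum_le_card_nsmul (Finset.range (k+2)) _ _ hterm
  rw [Finset.card_range, nsmul_eq_mul] at htotal
  refine htotal.trans_eq ?_
  push_cast
  ring

lemma Dm_symm (p : ℝ) (ω : Fin d × Fin d → Bool) : (Dm p ω)ᵀ = Dm p ω := by
  funext i j
  simp only [Matrix.transpose_apply, Dm]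
  rw [min_comm, max_comm]

lemma deterministic_bound {μ p T : ℝ} {z x : Fin d → ℝ} (ω : Fin d × Fin d → Bool)
    (hdpos : 0 < d) (hμ : 0 < μ) (hp : 0 < p) (hT : 0 ≤ T)
    (hzinf : ∀ i, |z i| ≤ μ / Real.sqrt d)
    (hxinf : ∀ i, |x i| ≤ 2 * μ / Real.sqrt d) (hx1 : vnorm x ≤ 1)
    (hop : ∀ u : Fin d → ℝ, vnorm ((Dm p ω).mulVec u) ≤ T * vnorm u)
    (hfoc : (projO ω (outer z z - outer x x)).mulVec x = 0) :
    vnorm ((z ⬝ᵥ x) • z - vnorm x ^ 2 • x) ≤ 5 * μ^2 * T / (p * d) := by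
  have hdr : (0:ℝ) < d := by exact_mod_cast hdpos
  have hsq : Real.sqrt d > 0 := Real.sqrt_pos.mpr hdr
  set q : Fin d → ℝ := fun i => (z ⬝ᵥ x) * z i - vnorm x ^ 2 * x i with hq
  have hqeq : ((z ⬝ᵥ x) • z - vnorm x ^ 2 • x) = q := by
    funext i
    simp [hq]
  rw [hqeq]
  set w1 : Fin d → ℝ := (Dm p ω).mulVec (fun j => z j * x j) with hw1
  set w2 : Fin d → ℝ := (Dm p ω).mulVec (fun j => x j * x j) with hw2
  -- key identity
  have key : ∀ i, p * q i = x i * w2 i - z i * w1 i := by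
    intro i
    have h0 : ∑ j, (if ω (min i j, max i j) then (z i * z j - x i * x j) else 0) * x j
        = 0 := by
      have := congrFun hfoc i
      simpa [projO, Matrix.mulVec, dotProduct, outer, Matrix.sub_apply] using this
    have hw1i : w1 i = ∑ j, ((if ω (min i j, max i j) then (1:ℝ) else 0) - p)
        * (z j * x j) := by
      simp [hw1, Dm, Matrix.mulVec, dotProduct]
    have hw2i : w2 i = ∑ j, ((if ω (min i j, max i j) then (1:ℝ) else 0) - p)
        * (x j * x j) := by
      simp [hw2, Dm, Matrix.mulVec, dotProduct]
    have hqi : q i = ∑ j, (z i * z j - x i * x j) * x j := by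
      rw [hq]
      simp only [dotProduct, vnorm_sq]
      rw [Finset.sum_mul, Finset.sum_mul, ← Finset.sum_sub_distrib]
      apply Finset.sum_congr rfl
      intro j _
      ring
    have hper : ∀ j, p * ((z i * z j - x i * x j) * x j)
        - (x i * (((if ω (min i j, max i j) then (1:ℝ) else 0) - p) * (x j * x j))
           - z i * (((if ω (min i j, max i j) then (1:ℝ) else 0) - p) * (z j * x j)))
        = (if ω (min i j, max i j) then (z i * z j - x i * x j) else 0) * x j := by
      intro j
      split_ifs <;> ring
    have hsum : p * q i - (x i * w2 i - z i * w1 i) = 0 := by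
      rw [hqi, hw1i, hw2i, Finset.mul_sum, Finset.mul_sum, Finset.mul_sum,
        ← Finset.sum_sub_distrib, ← Finset.sum_sub_distrib]
      rw [Finset.sum_congr rfl (fun j _ => hper j)]
      exact h0
    linarith
  -- norms
  have hzx : vnorm (fun j => z j * x j) ≤ (μ / Real.sqrt d) * vnorm x :=
    vnorm_mul_le (by positivity) hzinf
  have hxx : vnorm (fun j => x j * x j) ≤ (2 * μ / Real.sqrt d) * vnorm x :=
    vnorm_mul_le (by positivity) hxinf
  have hw1n : vnorm w1 ≤ T * ((μ / Real.sqrt d) * vnorm x) := by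
    refine (hop _).trans ?_
    exact mul_le_mul_of_nonneg_left hzx hT
  have hw2n : vnorm w2 ≤ T * ((2 * μ / Real.sqrt d) * vnorm x) := by
    refine (hop _).trans ?_
    exact mul_le_mul_of_nonneg_left hxx hT
  have hsplit : vnorm (fun i => p * q i)
      ≤ (2 * μ / Real.sqrt d) * vnorm w2 + (μ / Real.sqrt d) * vnorm w1 := by
    rw [show (fun i => p * q i) = fun i => x i * w2 i - z i * w1 i from
      funext fun i => key i]
    refine (vnorm_sub_le _ _).trans ?_
    gcongr
    · exact vnorm_mul_le (by positivity) hxinf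
    · exact vnorm_mul_le (by positivity) hzinf
  have hpq : vnorm (fun i => p * q i) = p * vnorm q := by
    have : (fun i => p * q i) = p • q := by funext i; simp
    rw [this, vnorm_smul, abs_of_pos hp]
  rw [hpq] at hsplit
  have hdd : Real.sqrt d * Real.sqrt d = d := Real.mul_self_sqrt hdr.le
  have hx0 : 0 ≤ vnorm x := vnorm_nonneg x
  have hfin : p * vnorm q ≤ 5 * μ^2 * T / d := by
    have h2 : (2 * μ / Real.sqrt d) * vnorm w2 + (μ / Real.sqrt d) * vnorm w1
        ≤ (2 * μ / Real.sqrt d) * (T * ((2 * μ / Real.sqrt d) * vnorm x))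
          + (μ / Real.sqrt d) * (T * ((μ / Real.sqrt d) * vnorm x)) := by
      gcongr <;> positivity
    have ha2 : (μ / Real.sqrt d)^2 = μ^2 / d := by
      rw [div_pow, Real.sq_sqrt hdr.le]
    have h3 : (2 * μ / Real.sqrt d) * (T * ((2 * μ / Real.sqrt d) * vnorm x))
          + (μ / Real.sqrt d) * (T * ((μ / Real.sqrt d) * vnorm x))
        = 5 * (μ / Real.sqrt d)^2 * T * vnorm x := by ring
    rw [h3, ha2] at h2
    have h5 : (0:ℝ) ≤ 5 * (μ^2/(d:ℝ)) * T := by positivity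
    have h6 := mul_le_of_le_one_right h5 hx1
    have h7 : 5 * (μ^2/(d:ℝ)) * T = 5 * μ^2 * T / d := by ring
    linarith
  -- divide by p
  have hrw : 5 * μ^2 * T / (p * (d:ℝ)) = (5 * μ^2 * T / d) / p := by
    rw [div_div, mul_comm p (d:ℝ)]
  rw [hrw, le_div_iff₀ hp, mul_comm]
  exact hfin

lemma exp_four_le : Real.exp 4 ≤ 81 := by
  have h := Real.exp_one_lt_d9
  have h4 : Real.exp 4 = Real.exp 1 ^ (4:ℕ) := by
    rw [← Real.exp_nat_mul]; norm_num
  rw [h4]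
  calc Real.exp 1 ^ (4:ℕ) ≤ 2.7182818286 ^ (4:ℕ) := by
        apply pow_le_pow_left₀ (Real.exp_pos 1).le h.le
    _ ≤ 81 := by norm_num

lemma exp_twenty_le : Real.exp 20 ≤ 5e9 := by
  have h := Real.exp_one_lt_d9
  have h4 : Real.exp 20 = Real.exp 1 ^ (20:ℕ) := by
    rw [← Real.exp_nat_mul]; norm_num
  rw [h4]
  calc Real.exp 1 ^ (20:ℕ) ≤ 2.7182818286 ^ (20:ℕ) := by
        apply pow_le_pow_left₀ (Real.exp_pos 1).le h.le
    _ ≤ 5e9 := by norm_num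

lemma half_le_log_two_rpow : (1:ℝ)/2 ≤ Real.log 2 ^ ((3:ℝ)/2) := by
  have ha : (0.6931471803:ℝ) < Real.log 2 := Real.log_two_gt_d9
  have ha0 : (0:ℝ) ≤ Real.log 2 := by linarith
  have hb0 : (0:ℝ) ≤ Real.log 2 ^ ((3:ℝ)/2) := Real.rpow_nonneg ha0 _
  have hsq : (Real.log 2 ^ ((3:ℝ)/2)) ^ (2:ℕ) = Real.log 2 ^ (3:ℕ) := by
    rw [← Real.rpow_natCast (Real.log 2 ^ ((3:ℝ)/2)) 2, ← Real.rpow_mul ha0]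
    norm_num
  have hc3 : (0.6931471803:ℝ)^(3:ℕ) ≤ Real.log 2 ^ (3:ℕ) :=
    pow_le_pow_left₀ (by norm_num) ha.le 3
  nlinarith [hc3, hsq, hb0]

lemma master_numeric {L : ℝ} {k : ℕ} (hL : 20 ≤ L) (hkL : L ≤ k) (hkU : (k:ℝ) ≤ 2*L+2)
    {dr : ℝ} (hdr : dr = Real.exp L) :
    ((k:ℝ)+2) * ((k:ℝ)+1)^(2*k+1) * dr^2 ≤ (20*L)^(2*k) := by
  have hL0 : (0:ℝ) < L := by linarith
  set a : ℝ := 20*L/9 with haa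
  have hk2a : (k:ℝ) + 2 ≤ a := by rw [haa]; linarith
  have hk1a : (k:ℝ) + 1 ≤ a := by linarith
  have ha0 : (0:ℝ) < a := by rw [haa]; positivity
  -- 400 L^2 ≤ 81 exp(2L)
  have e3 : 400*L^2 ≤ 81 * Real.exp (2*L) := by
    have h1 : L/2 + 1 ≤ Real.exp (L/2) := Real.add_one_le_exp _
    have h2 : (L/2+1)^(4:ℕ) ≤ Real.exp (L/2)^(4:ℕ) :=
      pow_le_pow_left₀ (by linarith) h1 4
    have h3 : Real.exp (L/2)^(4:ℕ) = Real.exp (2*L) := by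
      rw [← Real.exp_nat_mul]; congr 1; ring
    rw [h3] at h2
    nlinarith
  -- 81^k ≥ exp(4L)
  have e1 : Real.exp (4*L) ≤ (81:ℝ)^k := by
    calc Real.exp (4*L) ≤ Real.exp (4*(k:ℝ)) := by
          apply Real.exp_le_exp.mpr; linarith
      _ = Real.exp 4 ^ k := by rw [← Real.exp_nat_mul]; congr 1; ring
      _ ≤ (81:ℝ)^k := pow_le_pow_left₀ (Real.exp_pos 4).le exp_four_le k
  -- core: (20L)^2 d^2 ≤ 9^(2k+2)
  have ecore : (20*L)^2 * dr^2 ≤ (9:ℝ)^(2*k+2) := by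
    have h9 : (9:ℝ)^(2*k+2) = (81:ℝ)^(k+1) := by
      rw [show 2*k+2 = 2*(k+1) by ring, pow_mul]
      norm_num
    have hd2 : dr^2 = Real.exp (2*L) := by
      rw [hdr, ← Real.exp_nat_mul]
      norm_num
    have hexp4 : Real.exp (4*L) = Real.exp (2*L) * Real.exp (2*L) := by
      rw [← Real.exp_add]; congr 1; ring
    rw [h9, pow_succ, hd2]
    calc (20*L)^2 * Real.exp (2*L) = 400*L^2 * Real.exp (2*L) := by ring
      _ ≤ (81 * Real.exp (2*L)) * Real.exp (2*L) := by
          apply mul_le_mul_of_nonneg_right e3 (Real.exp_pos _).le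
      _ = Real.exp (4*L) * 81 := by rw [hexp4]; ring
      _ ≤ (81:ℝ)^k * 81 := by
          apply mul_le_mul_of_nonneg_right e1 (by norm_num)
  -- combine
  have h6 : ((k:ℝ)+2) * ((k:ℝ)+1)^(2*k+1) ≤ a^(2*k+2) := by
    calc ((k:ℝ)+2) * ((k:ℝ)+1)^(2*k+1) ≤ a * a^(2*k+1) := by
          apply mul_le_mul hk2a (pow_le_pow_left₀ (by positivity) hk1a _)
            (by positivity) ha0.le
      _ = a^(2*k+2) := by rw [← pow_succ']
  have h7 : a^(2*k+2) * (9:ℝ)^(2*k+2) = (20*L)^(2*k+2) := by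
    rw [← mul_pow]
    congr 1
    rw [haa]
    field_simp
  have h8 : (20*L)^(2*k+2) = (20*L)^(2*k) * (20*L)^2 := by rw [← pow_add]
  have h9pos : (0:ℝ) < (9:ℝ)^(2*k+2) := by positivity
  have hdr0 : (0:ℝ) < dr := by rw [hdr]; exact Real.exp_pos _
  refine le_of_mul_le_mul_right ?_ h9pos
  calc ((k:ℝ)+2) * ((k:ℝ)+1)^(2*k+1) * dr^2 * (9:ℝ)^(2*k+2)
      ≤ a^(2*k+2) * dr^2 * (9:ℝ)^(2*k+2) := by
        apply mul_le_mul_of_nonneg_right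
          (mul_le_mul_of_nonneg_right h6 (by positivity)) h9pos.le
    _ = (20*L)^(2*k+2) * dr^2 := by rw [← h7]; ring
    _ = (20*L)^(2*k) * ((20*L)^2 * dr^2) := by rw [h8]; ring
    _ ≤ (20*L)^(2*k) * (9:ℝ)^(2*k+2) := by
        apply mul_le_mul_of_nonneg_left ecore (by positivity)

lemma trace_even_pow_nonneg (p : ℝ) (ω : Fin d × Fin d → Bool) (k : ℕ) :
    0 ≤ ((Dm p ω : Matrix (Fin d) (Fin d) ℝ)^(2*k)).trace := by
  rw [show 2*k = k + k by ring, pow_add,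
    trace_mul_self_symm (by rw [Matrix.transpose_pow, Dm_symm])]
  positivity

lemma meas_all {s : Set (Fin d × Fin d → Bool)} : MeasurableSet s :=
  s.to_countable.measurableSet

lemma prob_trace_large (p : ℝ) (hp1 : p ≤ 1) (k : ℕ) {ε : ℝ} (hε : 0 < ε) :
    omegaMeasure d p hp1 {ω | ε < ((Dm p ω : Matrix (Fin d) (Fin d) ℝ)^(2*k)).trace}
      ≤ ENNReal.ofReal
        ((∫ ω, ((Dm p ω : Matrix (Fin d) (Fin d) ℝ)^(2*k)).trace
          ∂(omegaMeasure d p hp1)) / ε) := by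
  set ν := omegaMeasure d p hp1
  set f : (Fin d × Fin d → Bool) → ℝ :=
    fun ω => ((Dm p ω : Matrix (Fin d) (Fin d) ℝ)^(2*k)).trace with hf
  have hm := mul_meas_ge_le_integral_of_nonneg (μ := ν) (f := f)
    (Filter.Eventually.of_forall (fun ω => trace_even_pow_nonneg p ω k))
    Integrable.of_finite ε
  have hsub : {ω | ε < f ω} ⊆ {ω | ε ≤ f ω} := fun ω hω => by
    have h1 : ε < f ω := hω
    exact le_of_lt h1
  refine (measure_mono hsub).trans ?_
  have hfin : ν {ω | ε ≤ f ω} ≠ ⊤ := measure_ne_top _ _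
  rw [← ENNReal.ofReal_toReal hfin]
  apply ENNReal.ofReal_le_ofReal
  rw [le_div_iff₀ hε]
  rw [measureReal_def] at hm
  linarith [hm]

end Stmt6

open Stmt6 in
/-- there are absolute constants `c, C > 0` such that if
`p ≥ c μ⁶ log^{1.5} d / d`, then with probability at least `1 − 1/d` over `Ω`, every
incoherent `x` (`‖x‖_∞ ≤ 2μ/√d`, `‖x‖₂ ≤ 1`) satisfying the (regularizer-free)
first-order condition `P_Ω(zzᵀ − xxᵀ)x = 0` satisfies
`‖⟨z,x⟩z − ‖x‖²x‖ ≤ C μ³ log d (pd)^{−1/2}`. -/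
theorem stmt6 :
    ∃ c C : ℝ, 0 < c ∧ 0 < C ∧
      ∀ (d : ℕ), 0 < d →
      ∀ (μ p : ℝ) (z : Fin d → ℝ),
        0 < μ → 0 < p → ∀ (hp1 : p ≤ 1),
        vnorm z = 1 → (∀ i, |z i| ≤ μ / Real.sqrt d) →
        c * μ ^ 6 * Real.log d ^ ((3 : ℝ) / 2) / d ≤ p →
        1 - 1 / (d : ENNReal) ≤
          omegaMeasure d p hp1
            {ω | ∀ x : Fin d → ℝ,
              (∀ i, |x i| ≤ 2 * μ / Real.sqrt d) → vnorm x ≤ 1 →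
              (projO ω (outer z z - outer x x)).mulVec x = 0 →
              vnorm ((z ⬝ᵥ x) • z - vnorm x ^ 2 • x) ≤
                C * μ ^ 3 * Real.log d / Real.sqrt (p * d)} := by
  refine ⟨1e10, 100, by norm_num, by norm_num, ?_⟩
  intro d hd μ p z hμ hp hp1 hznorm hzinc hineq
  by_cases hd1 : d = 1
  · subst hd1
    simp
  -- from here on d ≥ 2
  have hd2 : 2 ≤ d := by omega
  have hd0r : (0:ℝ) < d := by exact_mod_cast hd
  have hd2r : (2:ℝ) ≤ d := by exact_mod_cast hd2
  set L := Real.log d with hLdef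
  have hL0 : 0 < L := Real.log_pos (by linarith)
  -- μ ≥ 1
  have hμ1 : 1 ≤ μ := by
    have h0 := vnorm_sq z
    rw [hznorm] at h0
    norm_num at h0
    have h2 : ∑ i, (z i)^2 ≤ ∑ _i : Fin d, (μ / Real.sqrt d)^2 := by
      apply Finset.sum_le_sum
      intro i _
      calc (z i)^2 = |z i|^2 := (sq_abs _).symm
        _ ≤ (μ / Real.sqrt d)^2 := pow_le_pow_left₀ (abs_nonneg _) (hzinc i) 2
    rw [Finset.sum_const, Finset.card_univ, Fintype.card_fin, nsmul_eq_mul] at h2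
    have h3 : (d:ℝ) * (μ / Real.sqrt d)^2 = μ^2 := by
      rw [div_pow, Real.sq_sqrt hd0r.le]
      field_simp
    rw [h3, ← h0] at h2
    nlinarith
  have hμ6 : 1 ≤ μ^6 := by
    simpa using pow_le_pow_left₀ zero_le_one hμ1 6
  -- rpow facts
  have hlog2L : Real.log 2 ≤ L := Real.log_le_log (by norm_num) hd2r
  have hrpow : (1:ℝ)/2 ≤ L ^ ((3:ℝ)/2) :=
    half_le_log_two_rpow.trans
      (Real.rpow_le_rpow (Real.log_nonneg one_le_two) hlog2L (by norm_num))
  -- pd lower bound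
  have hpd_central : 1e10 * μ^6 * L^((3:ℝ)/2) ≤ p * d := by
    have h := (div_le_iff₀ hd0r).mp hineq
    linarith
  have hpd5e9 : (5e9:ℝ) ≤ p * d := by nlinarith
  have hd5e9 : (5e9:ℝ) ≤ d := by nlinarith
  have hpd1 : (1:ℝ) ≤ p * d := by linarith
  have hpd0 : (0:ℝ) < p * d := by linarith
  -- L ≥ 20
  have hL20 : (20:ℝ) ≤ L := by
    rw [hLdef, Real.le_log_iff_exp_le hd0r]
    exact exp_twenty_le.trans hd5e9
  -- the walk length parameter k = 2^J
  set n0 := Nat.ceil L with hn0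
  have hn0L : L ≤ (n0:ℝ) := Nat.le_ceil L
  have hn0ge : 2 ≤ n0 := by
    have h20 : (2:ℝ) ≤ (n0:ℝ) := by linarith
    exact_mod_cast h20
  set J := Nat.clog 2 n0 with hJ
  set k := 2^J with hk
  have hkn0 : n0 ≤ k := Nat.le_pow_clog one_lt_two n0
  have hkL : L ≤ (k:ℝ) := hn0L.trans (by exact_mod_cast hkn0)
  have hkupper : (k:ℝ) ≤ 2*L + 2 := by
    have hJ1 : 0 < J := Nat.clog_pos one_lt_two hn0ge
    have h1 : 2^(J-1) < n0 := Nat.pow_pred_clog_lt_self one_lt_two hn0ge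
    have h2 : k < 2 * n0 := by
      have hexp : k = 2 * 2^(J-1) := by
        rw [hk, ← pow_succ']
        congr 1
        omega
      omega
    have h3 : (n0:ℝ) < L + 1 := Nat.ceil_lt_add_one hL0.le
    have h4 : (k:ℝ) < 2 * (n0:ℝ) := by exact_mod_cast h2
    linarith
  -- threshold
  set T := 20 * L * Real.sqrt (p*d) with hT
  have hsqrtpd : 0 < Real.sqrt (p*d) := Real.sqrt_pos.mpr hpd0
  have hT0 : 0 < T := by
    rw [hT]; positivity
  have hTpow : T^(2*k) = (20*L)^(2*k) * (p*d)^k := by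
    rw [hT, mul_pow, pow_mul (Real.sqrt (p*d)) 2 k, Real.sq_sqrt hpd0.le]
  -- good event
  set ν := omegaMeasure d p hp1 with hν
  set G := {ω : Fin d × Fin d → Bool |
    ((Dm p ω : Matrix (Fin d) (Fin d) ℝ)^(2*k)).trace ≤ T^(2*k)} with hG
  -- bad probability
  have hbad : ν Gᶜ ≤ 1/(d:ENNReal) := by
    have hGc : Gᶜ = {ω : Fin d × Fin d → Bool |
        T^(2*k) < ((Dm p ω : Matrix (Fin d) (Fin d) ℝ)^(2*k)).trace} := by
      ext ω
      simp [hG, not_le]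
    rw [hν, hGc]
    refine (prob_trace_large p hp1 k (by positivity)).trans ?_
    have hE := expected_trace_le (d := d) p hp hp1 hpd1 k
    have hmn := master_numeric hL20 hkL hkupper (dr := (d:ℝ))
      (by rw [hLdef, Real.exp_log hd0r])
    have hnum : ((((k:ℝ)+2) * d * ((k:ℝ)+1)^(2*k+1) * (p*d)^k)) / T^(2*k)
        ≤ 1/(d:ℝ) := by
      rw [div_le_div_iff₀ (by positivity) hd0r, hTpow]
      calc ((k:ℝ)+2) * d * ((k:ℝ)+1)^(2*k+1) * (p*d)^k * d
          = (((k:ℝ)+2) * ((k:ℝ)+1)^(2*k+1) * (d:ℝ)^2) * (p*d)^k := by ring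
        _ ≤ (20*L)^(2*k) * (p*d)^k := mul_le_mul_of_nonneg_right hmn (by positivity)
        _ = 1 * ((20*L)^(2*k) * (p*d)^k) := by ring
    calc ENNReal.ofReal
          ((∫ ω, ((Dm p ω : Matrix (Fin d) (Fin d) ℝ)^(2*k)).trace
            ∂(omegaMeasure d p hp1)) / T^(2*k))
        ≤ ENNReal.ofReal
          (((((k:ℝ)+2) * d * ((k:ℝ)+1)^(2*k+1) * (p*d)^k)) / T^(2*k)) := by
          apply ENNReal.ofReal_le_ofReal
          exact (div_le_div_iff_of_pos_right (by positivity)).mpr hE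
      _ ≤ ENNReal.ofReal (1/(d:ℝ)) := ENNReal.ofReal_le_ofReal hnum
      _ = 1/(d:ENNReal) := by
          rw [ENNReal.ofReal_div_of_pos hd0r, ENNReal.ofReal_one, ENNReal.ofReal_natCast]
  -- good event is contained in the target event
  have hGsub : G ⊆ {ω : Fin d × Fin d → Bool | ∀ x : Fin d → ℝ,
      (∀ i, |x i| ≤ 2 * μ / Real.sqrt d) → vnorm x ≤ 1 →
      (projO ω (outer z z - outer x x)).mulVec x = 0 →
      vnorm ((z ⬝ᵥ x) • z - vnorm x ^ 2 • x) ≤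
        100 * μ ^ 3 * L / Real.sqrt (p * d)} := by
    intro ω hω
    intro x hxinf hx1 hfoc
    have hop : ∀ u : Fin d → ℝ, vnorm ((Dm p ω).mulVec u) ≤ T * vnorm u := by
      intro u
      apply opBound_of_trace (Dm_symm p ω) J hT0.le ?_ u
      show ((Dm p ω : Matrix (Fin d) (Fin d) ℝ)^(2*2^J)).trace ≤ T^(2*2^J)
      rw [← hk]
      exact hω
    have hdet := deterministic_bound ω hd hμ hp hT0.le hzinc hxinf hx1 hop hfoc
    refine hdet.trans ?_
    have hs2 : Real.sqrt (p*d)^2 = p*d := Real.sq_sqrt hpd0.le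
    have heq : 5*μ^2*T/(p*(d:ℝ)) = 100*μ^2*L/Real.sqrt (p*d) := by
      rw [hT, div_eq_div_iff hpd0.ne' hsqrtpd.ne']
      linear_combination (100*μ^2*L) * hs2
    rw [heq]
    have hmu23 : μ^2 ≤ μ^3 := pow_le_pow_right₀ hμ1 (by norm_num)
    gcongr
  -- conclude
  have hcompl : ν G = 1 - ν Gᶜ := by
    have h := prob_compl_eq_one_sub (μ := ν) (s := Gᶜ) meas_all
    rwa [compl_compl] at h
  calc 1 - 1/(d:ENNReal) ≤ 1 - ν Gᶜ := tsub_le_tsub_left hbad 1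
    _ = ν G := hcompl.symm
    _ ≤ _ := measure_mono hGsub
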